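/- arXiv:1206.5352 — 5 statements merged into one kernel-verified Lean document; each statement's English description precedes it below -/
import Mathlib

section
/- Let x be an infinite word over a finite alphabet with subword complexity ρ. For every n ≥ 1, the set E_x(n) of positions of novel occurrences of length-n factors is a union of at most ρ(n) − ρ(n−1) + 1 maximal contiguous blocks of integers. -/
/-- The factor x[i..i+n-1] of the infinite word x, as a list. -/
def factor {A : Type*} (x : ℕ → A) (i n : ℕ) : List A :=
  (List.range n).map fun t => x (i + t)

/-- The occurrence of the length-n factor at position i is novel. -/
def novel {A : Type*} (x : ℕ → A) (i n : ℕ) : Prop :=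
  ∀ j < i, factor x j n ≠ factor x i n

/-- The set of positions of novel occurrences of length-n factors. -/
def novelSet {A : Type*} (x : ℕ → A) (n : ℕ) : Set ℕ := {i | novel x i n}

/-- The number of maximal contiguous blocks of a set of naturals,
counted as the number of "left endpoints". -/
noncomputable def numBlocks (S : Set ℕ) : ℕ :=
  Set.ncard {i | i ∈ S ∧ (i = 0 ∨ i - 1 ∉ S)}

/-- The subword complexity of x: the number of distinct factors of length n. -/
noncomputable def complexity {A : Type*} (x : ℕ → A) (n : ℕ) : ℕ :=
  Set.ncard {w : List A | ∃ i, w = factor x i n}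

lemma factor_eq_iff {A : Type*} (x : ℕ → A) (i j n : ℕ) :
    factor x i n = factor x j n ↔ ∀ t < n, x (i + t) = x (j + t) := by
  simp [factor, List.map_inj_left]

lemma factors_finite {A : Type*} [Fintype A] (x : ℕ → A) (n : ℕ) :
    {w : List A | ∃ i, w = factor x i n}.Finite := by
  apply (List.finite_length_eq A n).subset
  rintro w ⟨i, rfl⟩
  simp [factor]

theorem numBlocks_le_complexity_diff {A : Type*} [Fintype A] (x : ℕ → A) (n : ℕ)
    (hn : 1 ≤ n) :
    numBlocks (novelSet x n) ≤ complexity x n - complexity x (n - 1) + 1 := by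
  classical
  set Fn : Set (List A) := {w : List A | ∃ i, w = factor x i n} with hFn
  set Fm : Set (List A) := {w : List A | ∃ i, w = factor x i (n - 1)} with hFm
  have hFnfin : Fn.Finite := factors_finite x n
  have hFmfin : Fm.Finite := factors_finite x (n - 1)
  set L : Set ℕ := {i | i ∈ novelSet x n ∧ (i = 0 ∨ i - 1 ∉ novelSet x n)} with hL
  set L' : Set ℕ := {i | i ∈ L ∧ i ≠ 0} with hL'
  set f : ℕ → List A := fun i => factor x i n with hf
  set g : List A → List A := fun w => factor x (sInf {i | factor x i (n - 1) = w}) n with hg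
  -- g maps Fm into Fn and is injective on Fm
  have hSmem : ∀ w ∈ Fm, sInf {i | factor x i (n - 1) = w} ∈ {i | factor x i (n - 1) = w} := by
    rintro w ⟨k, rfl⟩
    exact Nat.sInf_mem ⟨k, rfl⟩
  have hgmem : ∀ w ∈ Fm, g w ∈ Fn := fun w _ => ⟨_, rfl⟩
  have hpref : ∀ i j : ℕ, factor x i n = factor x j n → factor x i (n - 1) = factor x j (n - 1) := by
    intro i j h
    rw [factor_eq_iff] at h ⊢
    intro t ht
    exact h t (lt_of_lt_of_le ht (Nat.sub_le n 1))
  have hginj : Set.InjOn g Fm := by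
    intro w hw w' hw' h
    have h1 := hSmem w hw
    have h2 := hSmem w' hw'
    have := hpref _ _ h
    rw [h1, h2] at this
    exact this
  -- f is injective on novel positions
  have hfinj : Set.InjOn f (novelSet x n) := by
    intro i hi j hj h
    rcases lt_trichotomy i j with hij | hij | hij
    · exact absurd h (hj i hij)
    · exact hij
    · exact absurd h.symm (hi j hij)
  -- f maps L' into Fn \ g '' Fm
  have hφ : ∀ i ∈ L', f i ∈ Fn \ g '' Fm := by
    rintro i ⟨⟨hinov, h0⟩, hi0⟩
    have hipos : 1 ≤ i := Nat.one_le_iff_ne_zero.mpr hi0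
    refine ⟨⟨i, rfl⟩, ?_⟩
    rintro ⟨w, hw, hgw⟩
    set m := sInf {k | factor x k (n - 1) = w} with hm
    have hmS : factor x m (n - 1) = w := hSmem w hw
    have hfm : factor x m n = factor x i n := hgw
    -- m ≥ i by novelty
    have hmi : i ≤ m := by
      by_contra hc
      exact hinov m (not_le.mp hc) hfm
    -- i ∈ S_w, so m ≤ i
    have hiS : factor x i (n - 1) = w := by
      rw [← hmS]; exact hpref i m hfm.symm
    have him : m ≤ i := Nat.sInf_le hiS
    have hmeq : m = i := le_antisymm him hmi
    -- i - 1 not novel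
    have hnot : i - 1 ∉ novelSet x n := h0.resolve_left hi0
    rw [novelSet, Set.mem_setOf_eq, novel] at hnot
    push_neg at hnot
    obtain ⟨j, hj, hjf⟩ := hnot
    -- factor x (j+1) (n-1) = factor x i (n-1) = w
    have hshift : factor x (j + 1) (n - 1) = w := by
      rw [← hiS]
      rw [factor_eq_iff] at hjf ⊢
      intro t ht
      have h1 : t + 1 < n := by omega
      have := hjf (t + 1) h1
      have e1 : j + (t + 1) = j + 1 + t := by ring
      have e2 : i - 1 + (t + 1) = i + t := by omega
      rw [e1, e2] at this
      exact this
    have : m ≤ j + 1 := Nat.sInf_le hshift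
    omega
  have hcard1 : L'.ncard ≤ (Fn \ g '' Fm).ncard := by
    refine Set.ncard_le_ncard_of_injOn f hφ ?_ hFnfin.diff
    exact hfinj.mono (fun i hi => hi.1.1)
  have hsub : g '' Fm ⊆ Fn := Set.image_subset_iff.mpr hgmem
  have hcard2 : (Fn \ g '' Fm).ncard = Fn.ncard - (g '' Fm).ncard :=
    Set.ncard_diff hsub (hFmfin.image g)
  have hcard3 : (g '' Fm).ncard = Fm.ncard := Set.ncard_image_of_injOn hginj
  -- L ⊆ insert 0 L'
  have hLsub : L ⊆ insert 0 L' := by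
    intro i hi
    by_cases h : i = 0
    · exact Or.inl h
    · exact Or.inr ⟨hi, h⟩
  have hL'fin : L'.Finite := by
    apply Set.Finite.of_finite_image (f := f) ?_ (hfinj.mono (fun i hi => hi.1.1))
    exact hFnfin.subset (by rintro w ⟨i, _, rfl⟩; exact ⟨i, rfl⟩)
  have hmain : numBlocks (novelSet x n) = L.ncard := rfl
  have h4 : L.ncard ≤ L'.ncard + 1 := by
    calc L.ncard ≤ (insert 0 L').ncard := Set.ncard_le_ncard hLsub (hL'fin.insert 0)
      _ ≤ L'.ncard + 1 := Set.ncard_insert_le 0 L'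
  have hcomp : complexity x n = Fn.ncard := rfl
  have hcomp' : complexity x (n - 1) = Fm.ncard := rfl
  rw [hmain, hcomp, hcomp']
  omega
end

section
/- Let w = ∏_{n≥1} (n)₂ be the infinite word over {0,1} obtained by concatenating the binary representations of 1, 2, 3, … . Then for each n ≥ 5, the set E_w(n) of positions of novel occurrences of length-n factors has at least n − 2 maximal contiguous blocks. -/
/-- The infinite word obtained by concatenating the binary representations
(most significant bit first) of 1, 2, 3, ... ; its k-th letter. -/
def champernowne2 (k : ℕ) : ℕ :=
  (((List.range (k + 1)).map fun n => (Nat.digits 2 (n + 1)).reverse).flatten).getD k 0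

namespace CWproof

def blen (v : ℕ) : ℕ := (Nat.digits 2 v).length

def wpos (v : ℕ) : ℕ := ∑ u ∈ Finset.range v, blen u

lemma blen_zero : blen 0 = 0 := by simp [blen]

lemma one_le_blen {v : ℕ} (h : 1 ≤ v) : 1 ≤ blen v := by
  rw [blen]
  have : Nat.digits 2 v ≠ [] := Nat.digits_ne_nil_iff_ne_zero.mpr (by omega)
  exact List.length_pos_iff.mpr this

lemma blen_eq_of {v k : ℕ} (h1 : 2 ^ k ≤ v) (h2 : v < 2 ^ (k + 1)) : blen v = k + 1 := by
  have hv : v ≠ 0 := by have := Nat.one_le_two_pow (n := k); omega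
  rw [blen, Nat.digits_len 2 v (by norm_num) hv,
    Nat.log_eq_of_pow_le_of_lt_pow h1 h2]

lemma two_pow_blen_le {v : ℕ} (h : 1 ≤ v) : 2 ^ (blen v - 1) ≤ v := by
  rw [blen, Nat.digits_len 2 v (by norm_num) (by omega)]
  simpa using Nat.pow_log_le_self 2 (by omega)

lemma lt_two_pow_blen (v : ℕ) : v < 2 ^ blen v := by
  rcases Nat.eq_zero_or_pos v with rfl | hv
  · simp [blen]
  · rw [blen, Nat.digits_len 2 v (by norm_num) (by omega)]
    exact Nat.lt_pow_succ_log_self (by norm_num) v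

lemma blen_two_pow_sub_one (e : ℕ) : blen (2 ^ e - 1) = e := by
  cases e with
  | zero => simp [blen]
  | succ k =>
    refine blen_eq_of ?_ ?_ <;>
    · have h1 : 2 ^ k ≥ 1 := Nat.one_le_two_pow
      have h2 : (2:ℕ) ^ (k+1) = 2 ^ k + 2 ^ k := by ring
      omega

lemma wpos_succ (v : ℕ) : wpos (v + 1) = wpos v + blen v := Finset.sum_range_succ _ _

lemma wpos_mono {u v : ℕ} (h : u ≤ v) : wpos u ≤ wpos v :=
  Finset.sum_le_sum_of_subset (Finset.range_subset_range.mpr h)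

lemma wpos_add_blen_le {u v : ℕ} (h : u < v) : wpos u + blen u ≤ wpos v := by
  rw [← wpos_succ]; exact wpos_mono h

lemma wpos_lt {u v : ℕ} (hu : 1 ≤ u) (h : u < v) : wpos u < wpos v := by
  have := wpos_add_blen_le h
  have := one_le_blen hu
  omega

lemma self_le_wpos_succ (v : ℕ) : v ≤ wpos (v + 1) := by
  induction v with
  | zero => simp
  | succ k ih =>
    have := wpos_succ (k + 1)
    have : 1 ≤ blen (k+1) := one_le_blen (by omega)
    have := wpos_succ (k + 1)
    omega

lemma digits_getD : ∀ (v i : ℕ), (Nat.digits 2 v).getD i 0 = v / 2 ^ i % 2 := by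
  intro v
  induction v using Nat.strong_induction_on with
  | _ v ih =>
    intro i
    rcases Nat.eq_zero_or_pos v with rfl | hv
    · simp
    · rw [Nat.digits_def' (by norm_num : 1 < 2) hv]
      cases i with
      | zero => simp
      | succ j =>
        have h2 : v / 2 < v := Nat.div_lt_self hv (by norm_num)
        simp only [List.getD_cons_succ]
        rw [ih (v / 2) h2 j, Nat.div_div_eq_div_mul]
        ring_nf

def Wl (M : ℕ) : List ℕ := ((List.range M).map fun n => (Nat.digits 2 (n + 1)).reverse).flatten

lemma Wl_succ (M : ℕ) : Wl (M + 1) = Wl M ++ (Nat.digits 2 (M + 1)).reverse := by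
  simp [Wl, List.range_succ]

lemma Wl_length (M : ℕ) : (Wl M).length = wpos (M + 1) := by
  induction M with
  | zero => simp [Wl, wpos, blen]
  | succ k ih =>
    rw [Wl_succ, List.length_append, ih, wpos_succ (k+1)]
    simp [blen]

lemma Wl_prefix {M M' : ℕ} (h : M ≤ M') : Wl M <+: Wl M' := by
  induction M' with
  | zero => simp_all
  | succ k ih =>
    rcases Nat.lt_or_ge M (k+1) with h' | h'
    · exact (ih (by omega)).trans ⟨_, (Wl_succ k).symm⟩
    · have : M = k + 1 := by omega
      subst this; exact List.prefix_rfl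

lemma Wl_getD_stable {M M' k : ℕ} (h : M ≤ M') (hk : k < (Wl M).length) :
    (Wl M').getD k 0 = (Wl M).getD k 0 := by
  obtain ⟨t, ht⟩ := Wl_prefix h
  rw [← ht, List.getD_append _ _ _ _ hk]

lemma champernowne2_eq (k : ℕ) : champernowne2 k = (Wl (k + 1)).getD k 0 := rfl

lemma cw_rev_getD {v r : ℕ} (h1 : 1 ≤ v) (hr : r < blen v) :
    champernowne2 (wpos v + r) = ((Nat.digits 2 v).reverse).getD r 0 := by
  set p := wpos v + r with hp
  have hvp : v ≤ p + 1 := by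
    have := self_le_wpos_succ (v - 1)
    have hv1 : v - 1 + 1 = v := by omega
    rw [hv1] at this
    omega
  have hlen : p < (Wl v).length := by
    rw [Wl_length, wpos_succ]
    omega
  rw [champernowne2_eq, Wl_getD_stable (by omega) hlen]
  have hv1 : v = (v - 1) + 1 := by omega
  rw [hv1, Wl_succ]
  have hlen2 : (Wl (v-1)).length = wpos v := by rw [Wl_length, ← hv1]
  rw [List.getD_append_right _ _ _ _ (by omega), hlen2, ← hv1]
  congr 1
  omega

lemma cw_at {v r : ℕ} (h1 : 1 ≤ v) (hr : r < blen v) :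
    champernowne2 (wpos v + r) = v / 2 ^ (blen v - 1 - r) % 2 := by
  rw [cw_rev_getD h1 hr]
  have hrl : r < (Nat.digits 2 v).reverse.length := by simpa [blen] using hr
  rw [List.getD_eq_getElem _ _ hrl, List.getElem_reverse, ← List.getD_eq_getElem _ 0,
    digits_getD]
  simp [blen]

lemma exists_rep (p : ℕ) : ∃ v r, 1 ≤ v ∧ r < blen v ∧ p = wpos v + r := by
  induction p with
  | zero =>
    exact ⟨1, 0, le_refl 1, by simp [blen], by simp [wpos, blen]⟩
  | succ q ih =>
    obtain ⟨v, r, h1, hr, rfl⟩ := ih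
    rcases Nat.lt_or_ge (r + 1) (blen v) with h | h
    · exact ⟨v, r + 1, h1, h, by omega⟩
    · refine ⟨v + 1, 0, by omega, one_le_blen (by omega), ?_⟩
      rw [wpos_succ]
      omega

lemma cw_lead {v : ℕ} (h : 1 ≤ v) : champernowne2 (wpos v) = 1 := by
  have := cw_at h (one_le_blen h)
  rw [Nat.add_zero] at this
  rw [this, Nat.sub_zero]
  have hle : 2 ^ (blen v - 1) ≤ v := two_pow_blen_le h
  have hlt : v < 2 ^ blen v := lt_two_pow_blen v
  have hb : blen v = (blen v - 1) + 1 := by have := one_le_blen h; omega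
  have : v / 2 ^ (blen v - 1) = 1 := by
    apply Nat.div_eq_of_lt_le (by simpa using hle)
    rw [hb] at hlt
    calc v < 2 ^ (blen v - 1 + 1) := hlt
    _ = 2 * 2 ^ (blen v - 1) := by ring
  rw [this]



lemma cw_testBit {v r : ℕ} (h1 : 1 ≤ v) (hr : r < blen v) :
    champernowne2 (wpos v + r) = (v.testBit (blen v - 1 - r)).toNat := by
  rw [cw_at h1 hr, Nat.testBit_eq_decide_div_mod_eq]
  rcases Nat.mod_two_eq_zero_or_one (v / 2 ^ (blen v - 1 - r)) with h | h <;> simp [h]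

lemma novelty_core {n c d q : ℕ} (hc : 2 ≤ c) (hd : 1 ≤ d) (hn : c + d = n)
    (h0 : ∀ t, t < c → champernowne2 (q + t) = 0)
    (h1 : ∀ t, t < d → champernowne2 (q + c + t) = 1) :
    wpos (2 ^ (n - 1) + 2 ^ (d - 1) - 1) + 1 ≤ q := by
  have hdn : d ≤ n - 2 := by omega
  have hBlt : 2 ^ (n - 1) + 2 ^ (d - 1) - 1 < 2 ^ n := by
    have h1' : (2:ℕ) ^ (d - 1) ≤ 2 ^ (n - 1) := Nat.pow_le_pow_right (by norm_num) (by omega)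
    have h2' : (2:ℕ) ^ n = 2 ^ (n - 1) + 2 ^ (n - 1) := by
      have h := pow_succ 2 (n - 1)
      rw [show n - 1 + 1 = n by omega] at h
      omega
    have h3' : 1 ≤ (2:ℕ) ^ (d-1) := Nat.one_le_two_pow
    omega
  obtain ⟨V, r, hV1, hr, hrep⟩ := exists_rep (q + (c - 1))
  -- conclusion follows from B ≤ V together with s < q
  have hsq : wpos V < q := by
    by_contra hge
    push_neg at hge
    have h0s := h0 (wpos V - q) (by omega)
    rw [show q + (wpos V - q) = wpos V by omega, cw_lead hV1] at h0s
    omega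
  have conclude : ∀ (_ : 2 ^ (n - 1) + 2 ^ (d - 1) - 1 ≤ V),
      wpos (2 ^ (n - 1) + 2 ^ (d - 1) - 1) + 1 ≤ q := by
    intro hBV
    have := wpos_mono hBV
    omega
  have hqs : q = wpos V + r - (c - 1) := by omega
  have hrc : c ≤ r := by omega
  set m := blen V with hm
  set e0 := m - 1 - r with he0
  have hme : m = r + 1 + e0 := by omega
  -- zeros inside V
  have hzero : ∀ u, e0 ≤ u → u < e0 + c → V.testBit u = false := by
    intro u hu1 hu2
    have hi : e0 + c - 1 - u < c := by omega
    have hoeq : q + (e0 + c - 1 - u) = wpos V + (r - (c - 1) + (e0 + c - 1 - u)) := by omega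
    have holt : r - (c - 1) + (e0 + c - 1 - u) < m := by omega
    have hbit := cw_testBit hV1 holt
    rw [← hoeq, h0 _ hi] at hbit
    have hidx : m - 1 - (r - (c - 1) + (e0 + c - 1 - u)) = u := by omega
    rw [hidx] at hbit
    cases hb : V.testBit u
    · rfl
    · rw [hb] at hbit; simp at hbit
  rcases Nat.lt_or_ge e0 d with he0d | he0d
  swap
  · -- Case A : d ≤ e0, so blen V ≥ n+1
    apply conclude
    have hA1 : (2:ℕ) ^ n ≤ 2 ^ (m - 1) := Nat.pow_le_pow_right (by norm_num) (by omega)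
    have hA2 : 2 ^ (m - 1) ≤ V := by rw [hm]; exact two_pow_blen_le hV1
    omega
  -- Case B : e0 < d
  have hone : ∀ u, u < e0 → V.testBit u = true := by
    intro u hu
    have hi : e0 - 1 - u < d := by omega
    have hoeq : q + c + (e0 - 1 - u) = wpos V + (r + 1 + (e0 - 1 - u)) := by omega
    have holt : r + 1 + (e0 - 1 - u) < m := by omega
    have hbit := cw_testBit hV1 holt
    rw [← hoeq, h1 _ hi] at hbit
    have hidx : m - 1 - (r + 1 + (e0 - 1 - u)) = u := by omega
    rw [hidx] at hbit
    cases hb : V.testBit u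
    · rw [hb] at hbit; simp at hbit
    · rfl
  have hmod : V % 2 ^ (e0 + c) = 2 ^ e0 - 1 := by
    apply Nat.eq_of_testBit_eq
    intro i
    rw [Nat.testBit_mod_two_pow, Nat.testBit_two_pow_sub_one]
    by_cases h1i : i < e0
    · simp [hone i h1i, h1i, (by omega : i < e0 + c)]
    · by_cases h2i : i < e0 + c
      · simp [hzero i (by omega) h2i, h2i, h1i]
      · simp [h2i, h1i]
  have hpowlt : (2:ℕ) ^ e0 < 2 ^ (e0 + c) := Nat.pow_lt_pow_right (by norm_num) (by omega)
  have h2e0 : 1 ≤ (2:ℕ) ^ e0 := Nat.one_le_two_pow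
  have hmod1 : (V + 1) % 2 ^ (e0 + c) = 2 ^ e0 := by
    rw [Nat.add_mod, hmod, Nat.mod_eq_of_lt (by omega : (1:ℕ) < 2 ^ (e0 + c)),
      show 2 ^ e0 - 1 + 1 = 2 ^ e0 by omega, Nat.mod_eq_of_lt hpowlt]
  set k := blen (V + 1) with hk
  set g := d - e0 with hg
  have hg1 : 1 ≤ g := by omega
  rcases Nat.lt_or_ge (e0 + c) k with hkbig | hksmall
  swap
  · -- Case B1 : impossible
    exfalso
    have hVlt : V + 1 < 2 ^ (e0 + c) :=
      lt_of_lt_of_le (lt_two_pow_blen (V + 1)) (Nat.pow_le_pow_right (by norm_num) hksmall)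
    have hVeq : V + 1 = 2 ^ e0 := by rw [← hmod1, Nat.mod_eq_of_lt hVlt]
    have hV2 : V = 2 ^ e0 - 1 := by omega
    rcases Nat.eq_zero_or_pos e0 with he00 | he0pos
    · rw [he00] at hVeq; omega
    · have : blen V = e0 := by rw [hV2]; exact blen_two_pow_sub_one e0
      omega
  -- Case B2
  have hone1 : ∀ j, j < g → j < k → (V + 1).testBit (k - 1 - j) = true := by
    intro j hjg hjk
    have hi : e0 + j < d := by omega
    have hoeq : q + c + (e0 + j) = wpos (V + 1) + j := by
      rw [wpos_succ]; omega
    have hbit := cw_testBit (v := V + 1) (by omega) hjk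
    rw [← hoeq, h1 _ hi] at hbit
    cases hb : (V + 1).testBit (k - 1 - j)
    · rw [hb] at hbit; simp at hbit
    · rfl
  rcases Nat.lt_or_ge (k - g) (e0 + c) with hover | hsep
  · -- overlap: contradiction
    exfalso
    have hj : k - (e0 + c) < g := by omega
    have hbit := hone1 (k - (e0 + c)) hj (by omega)
    rw [show k - 1 - (k - (e0 + c)) = e0 + c - 1 by omega] at hbit
    have hfalse : (V + 1).testBit (e0 + c - 1) = false := by
      have h := Nat.testBit_mod_two_pow (V + 1) (e0 + c) (e0 + c - 1)
      rw [hmod1, Nat.testBit_two_pow] at h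
      have hd' : (decide (e0 = e0 + c - 1)) = false := by
        simp only [decide_eq_false_iff_not]; omega
      rw [hd'] at h
      have hd2 : (decide (e0 + c - 1 < e0 + c)) = true := by
        simp only [decide_eq_true_eq]; omega
      rw [hd2, Bool.true_and] at h
      exact h.symm
    rw [hbit] at hfalse; simp at hfalse
  · -- k - g ≥ e0 + c, hence k ≥ n
    have hkn : n ≤ k := by omega
    have htop : 2 ^ (k - 1) ≤ V + 1 := by
      have := two_pow_blen_le (v := V + 1) (by omega)
      rwa [← hk] at this
    apply conclude
    rcases Nat.lt_or_ge g 2 with hg2 | hg2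
    · -- g = 1 : e0 = d - 1, e0 + c = n - 1
      have hec : e0 + c = n - 1 := by omega
      have hdivpos : 1 ≤ (V + 1) / 2 ^ (n - 1) := by
        rw [Nat.le_div_iff_mul_le (by positivity)]
        have : (2:ℕ) ^ (n-1) ≤ 2 ^ (k-1) := Nat.pow_le_pow_right (by norm_num) (by omega)
        omega
      have hdm := Nat.div_add_mod (V + 1) (2 ^ (n - 1))
      rw [← hec, hmod1, hec] at hdm
      have he0d1 : e0 = d - 1 := by omega
      have : 2 ^ (n - 1) * 1 ≤ 2 ^ (n - 1) * ((V + 1) / 2 ^ (n - 1)) :=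
        Nat.mul_le_mul_left _ hdivpos
      rw [he0d1] at hdm
      omega
    · -- g ≥ 2 : two top bits
      have hb2 : (V + 1).testBit (k - 2) = true := by
        have := hone1 1 (by omega) (by omega)
        rwa [show k - 1 - 1 = k - 2 by omega] at this
      have hmodbit : ((V + 1) % 2 ^ (k - 1)).testBit (k - 2) = true := by
        rw [Nat.testBit_mod_two_pow, hb2]
        simp only [Bool.and_true, decide_eq_true_eq]
        omega
      have hrem : 2 ^ (k - 2) ≤ (V + 1) % 2 ^ (k - 1) :=
        Nat.ge_two_pow_of_testBit hmodbit
      have hdiv1 : (V + 1) / 2 ^ (k - 1) = 1 := by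
        apply Nat.div_eq_of_lt_le (by simpa using htop)
        have : V + 1 < 2 ^ k := lt_two_pow_blen (V + 1)
        calc V + 1 < 2 ^ k := this
        _ = 2 * 2 ^ (k - 1) := by rw [← pow_succ']; congr 1; omega
      have hdm := Nat.div_add_mod (V + 1) (2 ^ (k - 1))
      rw [hdiv1, Nat.mul_one] at hdm
      have hk1 : (2:ℕ) ^ (n - 1) ≤ 2 ^ (k - 1) := Nat.pow_le_pow_right (by norm_num) (by omega)
      have hk2 : (2:ℕ) ^ (d - 1) ≤ 2 ^ (k - 2) := Nat.pow_le_pow_right (by norm_num) (by omega)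
      omega

lemma factor_eq_iff {A : Type*} (x : ℕ → A) (i j n : ℕ) :
    factor x i n = factor x j n ↔ ∀ t < n, x (i + t) = x (j + t) := by
  unfold factor
  rw [List.map_inj_left]
  constructor
  · intro h t ht; exact h t (List.mem_range.mpr ht)
  · intro h t ht; exact h t (List.mem_range.mp ht)

section main
variable {n : ℕ}

lemma pow_lemma1 (hn : 5 ≤ n) {d : ℕ} (hd1 : 1 ≤ d) (hd2 : d ≤ n - 2) :
    2 ^ (n - 1) ≤ 2 ^ (n - 1) + 2 ^ (d - 1) - 1 ∧
      2 ^ (n - 1) + 2 ^ (d - 1) - 1 < 2 ^ (n - 1 + 1) := by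
  have h1 : (2:ℕ) ^ (d - 1) ≤ 2 ^ (n - 1) := Nat.pow_le_pow_right (by norm_num) (by omega)
  have h2 : 1 ≤ (2:ℕ) ^ (d - 1) := Nat.one_le_two_pow
  have h3 : (2:ℕ) ^ (n - 1 + 1) = 2 ^ (n - 1) + 2 ^ (n - 1) := by rw [pow_succ]; ring
  omega

lemma blen_B (hn : 5 ≤ n) {d : ℕ} (hd1 : 1 ≤ d) (hd2 : d ≤ n - 2) :
    blen (2 ^ (n - 1) + 2 ^ (d - 1) - 1) = n := by
  obtain ⟨h1, h2⟩ := pow_lemma1 hn hd1 hd2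
  rw [blen_eq_of h1 h2]; omega

lemma testBit_B (hn : 5 ≤ n) {d : ℕ} (hd1 : 1 ≤ d) (hd2 : d ≤ n - 2) {i : ℕ} (hi : i < n - 1) :
    (2 ^ (n - 1) + 2 ^ (d - 1) - 1).testBit i = decide (i < d - 1) := by
  set B := 2 ^ (n - 1) + 2 ^ (d - 1) - 1 with hB
  have h2 : 1 ≤ (2:ℕ) ^ (d - 1) := Nat.one_le_two_pow
  have hple : (2:ℕ) ^ (d - 1) ≤ 2 ^ (n - 1) := Nat.pow_le_pow_right (by norm_num) (by omega)
  have hmod : B % 2 ^ (n - 1) = 2 ^ (d - 1) - 1 := by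
    have hBeq : B = 2 ^ (n - 1) + (2 ^ (d - 1) - 1) := by omega
    rw [hBeq, Nat.add_mod_left]
    exact Nat.mod_eq_of_lt (by omega)
  have h := Nat.testBit_mod_two_pow B (n - 1) i
  rw [hmod, Nat.testBit_two_pow_sub_one] at h
  rw [h]
  simp [hi]

lemma factor_nu (hn : 5 ≤ n) {d : ℕ} (hd1 : 1 ≤ d) (hd2 : d ≤ n - 2) {t : ℕ} (ht : t < n) :
    champernowne2 (wpos (2 ^ (n - 1) + 2 ^ (d - 1) - 1) + 1 + t) = if t < n - d then 0 else 1 := by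
  set B := 2 ^ (n - 1) + 2 ^ (d - 1) - 1 with hB
  have hblen : blen B = n := blen_B hn hd1 hd2
  have hB1 : 1 ≤ B := by
    have := (pow_lemma1 hn hd1 hd2).1
    have : 1 ≤ (2:ℕ) ^ (n - 1) := Nat.one_le_two_pow
    omega
  rcases Nat.lt_or_ge t (n - 1) with ht' | ht'
  · have h := cw_at hB1 (r := 1 + t) (by omega)
    rw [show wpos B + (1 + t) = wpos B + 1 + t by omega, hblen] at h
    rw [h]
    have hidx : n - 1 - (1 + t) = n - 2 - t := by omega
    rw [hidx]
    have hbit := testBit_B hn hd1 hd2 (i := n - 2 - t) (by omega)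
    rw [Nat.testBit_eq_decide_div_mod_eq, decide_eq_decide] at hbit
    have hx2 : B / 2 ^ (n - 2 - t) % 2 < 2 := Nat.mod_lt _ (by norm_num)
    rcases Nat.lt_or_ge t (n - d) with hc | hc
    · have hno : ¬ (n - 2 - t < d - 1) := by omega
      have hx1 : ¬ (B / 2 ^ (n - 2 - t) % 2 = 1) := fun hh => hno (hbit.mp hh)
      simp only [hc, if_true]
      omega
    · have hyes : (n - 2 - t < d - 1) := by omega
      have hx1 : B / 2 ^ (n - 2 - t) % 2 = 1 := hbit.mpr hyes
      simp only [show ¬ (t < n - d) by omega, if_false]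
      omega
  · have htn : t = n - 1 := by omega
    have hpos : wpos B + 1 + t = wpos (B + 1) := by
      rw [wpos_succ, hblen]; omega
    rw [hpos, cw_lead (by omega)]
    have : ¬ (t < n - d) := by omega
    simp [this]

lemma nu_novel (hn : 5 ≤ n) {d : ℕ} (hd1 : 1 ≤ d) (hd2 : d ≤ n - 2) :
    novel champernowne2 (wpos (2 ^ (n - 1) + 2 ^ (d - 1) - 1) + 1) n := by
  set B := 2 ^ (n - 1) + 2 ^ (d - 1) - 1 with hB
  intro j hj heq
  rw [factor_eq_iff] at heq
  have hcore := novelty_core (n := n) (c := n - d) (d := d) (q := j)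
    (by omega) hd1 (by omega) ?_ ?_
  · rw [← hB] at hcore; omega
  · intro t htc
    rw [heq t (by omega), factor_nu hn hd1 hd2 (by omega)]
    simp [htc]
  · intro t htd
    rw [show j + (n - d) + t = j + (n - d + t) by omega,
      heq (n - d + t) (by omega), factor_nu hn hd1 hd2 (by omega)]
    simp [show ¬ (n - d + t < n - d) by omega]

lemma sigma_nonnovel (hn : 5 ≤ n) {d : ℕ} (hd1 : 1 ≤ d) (hd2 : d ≤ n - 3) :
    ¬ novel champernowne2 (wpos (2 ^ (n - 1) + 2 ^ d - 1)) n := by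
  set V := 2 ^ (n - 1) + 2 ^ d - 1 with hV
  set U := 2 ^ (n - 2) + 2 ^ (d - 1) - 1 with hU
  have hp1 : (2:ℕ) ^ (n - 1) = 2 * 2 ^ (n - 2) := by
    have h := pow_succ 2 (n - 2)
    rw [show n - 2 + 1 = n - 1 by omega] at h
    rw [h]; ring
  have hp2 : (2:ℕ) ^ d = 2 * 2 ^ (d - 1) := by
    have h := pow_succ 2 (d - 1)
    rw [show d - 1 + 1 = d by omega] at h
    rw [h]; ring
  have hu2 : 1 ≤ (2:ℕ) ^ (d - 1) := Nat.one_le_two_pow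
  have hu3 : 1 ≤ (2:ℕ) ^ (n - 2) := Nat.one_le_two_pow
  have hVU : V = 2 * U + 1 := by rw [hV, hU, hp1, hp2]; omega
  have hU1 : 1 ≤ U := by omega
  have hV1 : 1 ≤ V := by omega
  have hblenU : blen U = n - 1 := by
    have h1 : (2:ℕ) ^ (d - 1) ≤ 2 ^ (n - 2) := Nat.pow_le_pow_right (by norm_num) (by omega)
    have h3 : (2:ℕ) ^ (n - 2 + 1) = 2 ^ (n - 2) + 2 ^ (n - 2) := by rw [pow_succ]; ring
    rw [blen_eq_of (k := n - 2) (by omega) (by omega)]; omega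
  have hblenV : blen V = n := by
    have h1 : (2:ℕ) ^ d ≤ 2 ^ (n - 1) := Nat.pow_le_pow_right (by norm_num) (by omega)
    have h3 : (2:ℕ) ^ (n - 1 + 1) = 2 ^ (n - 1) + 2 ^ (n - 1) := by rw [pow_succ]; ring
    rw [blen_eq_of (k := n - 1) (by omega) (by omega)]; omega
  intro hnov
  refine hnov (wpos U) (wpos_lt hU1 (by omega)) ?_
  rw [factor_eq_iff]
  intro t ht
  rcases Nat.lt_or_ge t (n - 1) with ht' | ht'
  · have hu := cw_at hU1 (r := t) (by omega)
    have hv := cw_at hV1 (r := t) (by omega)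
    rw [hblenU] at hu
    rw [hblenV] at hv
    rw [hu, hv]
    have hsplit : n - 1 - t = (n - 2 - t) + 1 := by omega
    rw [hsplit, pow_succ', ← Nat.div_div_eq_div_mul, hVU]
    have h5 : (2 * U + 1) / 2 = U := by omega
    rw [h5, show n - 1 - 1 - t = n - 2 - t by omega]
  · have htn : t = n - 1 := by omega
    have hposU : wpos U + t = wpos (U + 1) := by rw [wpos_succ, hblenU]; omega
    have hv := cw_at hV1 (r := t) (by omega)
    rw [hblenV] at hv
    rw [hposU, cw_lead (by omega), hv, htn, show n - 1 - (n - 1) = 0 by omega]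
    simp [hVU]
end main

lemma cw_lt_two (k : ℕ) : champernowne2 k < 2 := by
  unfold champernowne2
  set L := ((List.range (k + 1)).map fun n => (Nat.digits 2 (n + 1)).reverse).flatten with hL
  have hmem : ∀ x ∈ L, x < 2 := by
    intro x hx
    rw [hL, List.mem_flatten] at hx
    obtain ⟨l, hl, hxl⟩ := hx
    rw [List.mem_map] at hl
    obtain ⟨m, _, rfl⟩ := hl
    rw [List.mem_reverse] at hxl
    exact Nat.digits_lt_base (by norm_num) hxl
  by_cases h : k < L.length
  · rw [List.getD_eq_getElem _ _ h]
    exact hmem _ (List.getElem_mem h)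
  · rw [List.getD_eq_default _ _ (by omega)]
    norm_num

lemma novelSet_finite (n : ℕ) : (novelSet champernowne2 n).Finite := by
  classical
  let F : ℕ → (Fin n → Fin 2) := fun i t => ⟨champernowne2 (i + t), cw_lt_two _⟩
  have hinj : Set.InjOn F (novelSet champernowne2 n) := by
    intro i hi j hj hij
    by_contra hne
    have hfac : factor champernowne2 i n = factor champernowne2 j n := by
      rw [factor_eq_iff]
      intro t ht
      have h2 := congrFun hij (⟨t, ht⟩ : Fin n)
      exact congrArg Fin.val h2
    rcases Nat.lt_or_ge i j with h | h
    · exact hj i h hfac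
    · exact hi j (by omega) hfac.symm
  exact Set.Finite.of_finite_image (Set.toFinite _) hinj

lemma blocks_ge {S : Set ℕ} (hfin : S.Finite) (N : ℕ) (νf σf : ℕ → ℕ)
    (hν : ∀ k, k < N → νf k ∈ S)
    (hσ : ∀ k, k + 1 < N → σf k ∉ S)
    (hord : ∀ k, k + 1 < N → νf k < σf k ∧ σf k < νf (k + 1)) :
    N ≤ numBlocks S := by
  classical
  set T : ℕ → Set ℕ := fun k => {j | j ≤ νf k ∧ ∀ i, j ≤ i → i ≤ νf k → i ∈ S} with hT
  set E : ℕ → ℕ := fun k => sInf (T k) with hEdef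
  have hTne : ∀ k, k < N → (νf k) ∈ T k := by
    intro k hk
    refine ⟨le_refl _, fun i h1 h2 => ?_⟩
    have : i = νf k := le_antisymm h2 h1
    rw [this]; exact hν k hk
  have hE : ∀ k, k < N → E k ∈ T k := fun k hk => Nat.sInf_mem ⟨_, hTne k hk⟩
  have hES : ∀ k, k < N → E k ∈ S := fun k hk => (hE k hk).2 _ (le_refl _) (hE k hk).1
  have hBS : ∀ k, k < N → E k ∈ {i | i ∈ S ∧ (i = 0 ∨ i - 1 ∉ S)} := by
    intro k hk
    refine ⟨hES k hk, ?_⟩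
    by_cases h0 : E k = 0
    · exact Or.inl h0
    · refine Or.inr fun hmem => ?_
      have hTmem : E k - 1 ∈ T k := by
        refine ⟨by have := (hE k hk).1; omega, fun i h1 h2 => ?_⟩
        rcases Nat.eq_or_lt_of_le h1 with heq | hlt
        · rw [← heq]; exact hmem
        · exact (hE k hk).2 i (by omega) h2
      have hsle := Nat.sInf_le hTmem
      change E k ≤ E k - 1 at hsle
      omega
  have hmono : ∀ k, k + 1 < N → E k < E (k + 1) := by
    intro k hk
    have h1 : E k ≤ νf k := (hE k (by omega)).1
    have h2 : σf k < E (k + 1) := by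
      by_contra hle
      push_neg at hle
      have hσν : σf k ≤ νf (k + 1) := le_of_lt (hord k hk).2
      have : σf k ∈ S := (hE (k + 1) (by omega)).2 (σf k) hle hσν
      exact hσ k hk this
    have := (hord k hk).1
    omega
  have hstrict : ∀ l k, k < l → l < N → E k < E l := by
    intro l
    induction l with
    | zero => omega
    | succ m ih =>
      intro k hkl hlN
      rcases Nat.lt_or_ge k m with h | h
      · exact lt_trans (ih k h (by omega)) (hmono m (by omega))
      · have : k = m := by omega
        subst this
        exact hmono k (by omega)
  have hcard : ((Finset.range N).image E).card = N := by
    rw [Finset.card_image_of_injOn, Finset.card_range]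
    intro a ha b hb hab
    simp only [Finset.coe_range, Set.mem_Iio] at ha hb
    by_contra hne
    rcases Nat.lt_or_ge a b with h | h
    · have := hstrict b a h hb; omega
    · have := hstrict a b (by omega) ha; omega
  have hsub : ↑((Finset.range N).image E) ⊆ {i | i ∈ S ∧ (i = 0 ∨ i - 1 ∉ S)} := by
    intro x hx
    simp only [Finset.coe_image, Set.mem_image, Finset.mem_coe, Finset.mem_range,
      Finset.coe_range, Set.mem_Iio] at hx
    obtain ⟨k, hk, rfl⟩ := hx
    exact hBS k hk
  have hfin2 : {i | i ∈ S ∧ (i = 0 ∨ i - 1 ∉ S)}.Finite :=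
    hfin.subset (fun x hx => hx.1)
  calc N = ((Finset.range N).image E).card := hcard.symm
  _ = (↑((Finset.range N).image E) : Set ℕ).ncard := (Set.ncard_coe_finset _).symm
  _ ≤ numBlocks S := Set.ncard_le_ncard hsub hfin2

end CWproof

theorem champernowne2_many_blocks (n : ℕ) (hn : 5 ≤ n) :
    n - 2 ≤ numBlocks (novelSet champernowne2 n) := by
  have hfin := CWproof.novelSet_finite n
  refine CWproof.blocks_ge hfin (n - 2)
    (fun k => CWproof.wpos (2 ^ (n - 1) + 2 ^ k - 1) + 1)
    (fun k => CWproof.wpos (2 ^ (n - 1) + 2 ^ (k + 1) - 1)) ?_ ?_ ?_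
  · intro k hk
    have h := CWproof.nu_novel (n := n) hn (d := k + 1) (by omega) (by omega)
    have he : k + 1 - 1 = k := rfl
    rw [he] at h
    exact h
  · intro k hk
    exact CWproof.sigma_nonnovel (n := n) hn (d := k + 1) (by omega) (by omega)
  · intro k hk
    constructor
    · have hblen : CWproof.blen (2 ^ (n - 1) + 2 ^ k - 1) = n := by
        have h := CWproof.blen_B (n := n) hn (d := k + 1) (by omega) (by omega)
        rwa [show k + 1 - 1 = k from rfl] at h
      have h1 : (2:ℕ) ^ k + 2 ^ k = 2 ^ (k + 1) := by rw [pow_succ]; ring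
      have h2 : 1 ≤ (2:ℕ) ^ k := Nat.one_le_two_pow
      have h3 : 1 ≤ (2:ℕ) ^ (n - 1) := Nat.one_le_two_pow
      have hle : (2 ^ (n - 1) + 2 ^ k - 1) + 1 ≤ 2 ^ (n - 1) + 2 ^ (k + 1) - 1 := by omega
      have hmon := CWproof.wpos_mono hle
      rw [CWproof.wpos_succ, hblen] at hmon
      show CWproof.wpos (2 ^ (n - 1) + 2 ^ k - 1) + 1 <
        CWproof.wpos (2 ^ (n - 1) + 2 ^ (k + 1) - 1)
      omega
    · exact Nat.lt_succ_self _
end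

section
/- Let z be an infinite word and n ≥ 2. Suppose z[i..i+n-1] and z[j..j+n-1] are both powers, where i < j ≤ i + n/3. Then for every t with i ≤ t ≤ j, the factor z[t..t+n-1] is a power; moreover, all the words z[t..t+n-1] for i ≤ t ≤ j are conjugates of each other. -/
/-- x^k : the word x repeated k times. -/
def wpow {A : Type*} (x : List A) : ℕ → List A
  | 0 => []
  | k + 1 => x ++ wpow x k

/-- A word is a power if it is x^k for some word x and k ≥ 2. -/
def isPower {A : Type*} (w : List A) : Prop := ∃ x k, 2 ≤ k ∧ w = wpow x k

/-- w has period p. -/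
def hasPeriod {A : Type*} (w : List A) (p : ℕ) : Prop :=
  ∀ i, i + p < w.length → w[i + p]? = w[i]?

/-- u and v are conjugate words. -/
def conjugate {A : Type*} (u v : List A) : Prop := ∃ s t, u = s ++ t ∧ v = t ++ s

/-- A nonempty word is primitive if it is not a power. -/
def primitive {A : Type*} (x : List A) : Prop := x ≠ [] ∧ ¬ isPower x

section Auxiliary
variable {A : Type*}

/-- z has period p on the window [t, t+L). -/
def FP (z : ℕ → A) (t L p : ℕ) : Prop := ∀ s, s + p < L → z (t + s) = z (t + s + p)

lemma FP.mono {z : ℕ → A} {t L p : ℕ} (h : FP z t L p) {L' : ℕ} (hL : L' ≤ L) : FP z t L' p :=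
  fun s hs => h s (lt_of_lt_of_le hs hL)

lemma FP.shift {z : ℕ → A} {t L p : ℕ} (h : FP z t L p) (a : ℕ) : FP z (t + a) (L - a) p := by
  intro s hs
  have h1 := h (a + s) (by omega)
  have e1 : t + (a + s) = t + a + s := by omega
  have e2 : t + (a + s) + p = t + a + s + p := by omega
  rwa [e1] at h1

lemma FP.mod_reduce {z : ℕ → A} {t L p : ℕ} (hp : 0 < p) (h : FP z t L p) :
    ∀ s, s < L → z (t + s) = z (t + s % p) := by
  intro s
  induction s using Nat.strong_induction_on with
  | _ s ih =>
    intro hs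
    rcases lt_or_ge s p with h1 | h1
    · rw [Nat.mod_eq_of_lt h1]
    · have h2 := h (s - p) (by omega)
      have e : t + (s - p) + p = t + s := by omega
      rw [e] at h2
      have h3 := ih (s - p) (by omega) (by omega)
      rw [← h2, h3, Nat.mod_eq_sub_mod h1]

/-- Extension: if g ∣ p, the window has period p and its prefix of length L - p has
period g, and L ≥ 2p, then the whole window has period g. -/
lemma fp_ext {z : ℕ → A} {t L p g : ℕ} (hg : 0 < g) (hp : 0 < p) (hgp : g ∣ p)
    (hL : 2 * p ≤ L) (hP : FP z t L p) (hG : FP z t (L - p) g) : FP z t L g := by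
  have hgle : g ≤ p := Nat.le_of_dvd hp hgp
  intro s
  induction s using Nat.strong_induction_on with
  | _ s ih =>
    intro hs
    rcases lt_or_ge (s + g) (L - p) with hc | hc
    · exact hG s hc
    rcases le_or_gt p s with hb | hb
    · have h1 := hP (s - p) (by omega)
      have h2 := hP (s - p + g) (by omega)
      have h3 := ih (s - p) (by omega) (by omega)
      have e1 : t + (s - p) + p = t + s := by omega
      have e2 : t + (s - p + g) + p = t + s + g := by omega
      have e3 : t + (s - p) + g = t + (s - p + g) := by omega
      rw [e1] at h1; rw [e2] at h2; rw [e3] at h3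
      rw [← h1, h3, h2]
    · -- s < p and s + g ≥ L - p; note L ≥ 2p so s + g ≥ p
      have hup : p ≤ s + g := by omega
      have h1 := hP (s + g - p) (by omega)
      have e1 : t + (s + g - p) + p = t + s + g := by omega
      rw [e1] at h1
      have chain : ∀ k, s + g - p + k * g ≤ s →
          z (t + (s + g - p)) = z (t + (s + g - p + k * g)) := by
        intro k
        induction k with
        | zero => intro _; simp
        | succ k ihk =>
          intro hk
          have hmul : (k + 1) * g = k * g + g := by ring
          rw [hmul] at hk ⊢
          have hstep := ih (s + g - p + k * g) (by omega) (by omega)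
          have e2 : t + (s + g - p + k * g) + g = t + (s + g - p + (k * g + g)) := by omega
          rw [e2] at hstep
          exact (ihk (by omega)).trans hstep
      obtain ⟨c, hc⟩ := hgp
      have hc1 : c ≠ 0 := by rintro rfl; rw [Nat.mul_zero] at hc; omega
      have hcg : (c - 1) * g = p - g := by
        have h5 : (c - 1) * g + 1 * g = c * g := by
          rw [← Nat.add_mul]; congr 1; omega
        have hcgp : c * g = p := by rw [Nat.mul_comm]; omega
        omega
      have hfin := chain (c - 1) (by omega)
      have e3 : s + g - p + (c - 1) * g = s := by omega
      rw [e3] at hfin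
      rw [← hfin, h1]

/-- Fine and Wilf. -/
lemma fw_aux (z : ℕ → A) (t : ℕ) :
    ∀ N p q L, p + q ≤ N → 0 < p → 0 < q → FP z t L p → FP z t L q →
      p + q - Nat.gcd p q ≤ L → FP z t L (Nat.gcd p q) := by
  intro N
  induction N with
  | zero => intro p q L h hp _ _ _ _; omega
  | succ N ih =>
    intro p q L hN hp hq h1 h2 hL
    rcases Nat.lt_trichotomy p q with hlt | heq | hgt
    · -- p < q : peel p off q
      have hgcd : Nat.gcd p (q - p) = Nat.gcd p q := Nat.gcd_sub_self_right (le_of_lt hlt)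
      have hgd1 : Nat.gcd p (q - p) ∣ (q - p) := Nat.gcd_dvd_right _ _
      have hgle : Nat.gcd p (q - p) ≤ q - p := Nat.le_of_dvd (by omega) hgd1
      have hQ' : FP z t (L - p) (q - p) := by
        intro s hs
        have ha := h2 s (by omega)
        have hb := h1 (s + (q - p)) (by omega)
        have e1 : t + (s + (q - p)) + p = t + s + q := by omega
        have e2 : t + (s + (q - p)) = t + s + (q - p) := by omega
        rw [e1, e2] at hb
        rw [ha, ← hb]
      have hG := ih p (q - p) (L - p) (by omega) hp (by omega) (h1.mono (by omega)) hQ'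
        (by rw [hgcd]; omega)
      rw [hgcd] at hG
      have hgp : Nat.gcd p q ∣ p := Nat.gcd_dvd_left _ _
      have hgpos : 0 < Nat.gcd p q := Nat.gcd_pos_of_pos_left _ hp
      rw [hgcd] at hgle
      exact fp_ext hgpos hp hgp (by omega) h1 hG
    · subst heq; rw [Nat.gcd_self]; exact h1
    · -- q < p : peel q off p
      have hgcd : Nat.gcd (p - q) q = Nat.gcd p q := by
        rw [Nat.gcd_comm, Nat.gcd_sub_self_right (le_of_lt hgt), Nat.gcd_comm]
      have hgd1 : Nat.gcd (p - q) q ∣ (p - q) := Nat.gcd_dvd_left _ _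
      have hgle : Nat.gcd (p - q) q ≤ p - q := Nat.le_of_dvd (by omega) hgd1
      have hP' : FP z t (L - q) (p - q) := by
        intro s hs
        have ha := h1 s (by omega)
        have hb := h2 (s + (p - q)) (by omega)
        have e1 : t + (s + (p - q)) + q = t + s + p := by omega
        have e2 : t + (s + (p - q)) = t + s + (p - q) := by omega
        rw [e1, e2] at hb
        rw [ha, ← hb]
      have hG := ih (p - q) q (L - q) (by omega) (by omega) hq hP' (h2.mono (by omega))
        (by rw [hgcd]; omega)
      rw [hgcd] at hG
      have hgp : Nat.gcd p q ∣ q := Nat.gcd_dvd_right _ _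
      have hgpos : 0 < Nat.gcd p q := Nat.gcd_pos_of_pos_left _ hp
      rw [hgcd] at hgle
      exact fp_ext hgpos hq hgp (by omega) h2 hG

lemma fw {z : ℕ → A} {t p q L : ℕ} (hp : 0 < p) (hq : 0 < q) (h1 : FP z t L p)
    (h2 : FP z t L q) (hL : p + q - Nat.gcd p q ≤ L) : FP z t L (Nat.gcd p q) :=
  fw_aux z t (p + q) p q L le_rfl hp hq h1 h2 hL


lemma factor_length (z : ℕ → A) (t n : ℕ) : (factor z t n).length = n := by simp [factor]

lemma factor_get? (z : ℕ → A) (t n s : ℕ) (h : s < n) :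
    (factor z t n)[s]? = some (z (t + s)) := by
  simp [factor, List.getElem?_map, List.getElem?_range, h]

lemma wpow_length (x : List A) (k : ℕ) : (wpow x k).length = k * x.length := by
  induction k with
  | zero => simp [wpow]
  | succ k ih => simp [wpow, ih]; ring

lemma wpow_get? (x : List A) (hx : x ≠ []) (k : ℕ) :
    ∀ s, s < k * x.length → (wpow x k)[s]? = x[s % x.length]? := by
  have hp : 0 < x.length := List.length_pos_iff.mpr hx
  induction k with
  | zero => intro s hs; omega
  | succ k ih =>
    intro s hs
    have hsum : (k + 1) * x.length = k * x.length + x.length := by ring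
    show (x ++ wpow x k)[s]? = _
    rcases lt_or_ge s x.length with h1 | h1
    · rw [List.getElem?_append_left h1, Nat.mod_eq_of_lt h1]
    · rw [List.getElem?_append_right h1]
      rw [ih (s - x.length) (by omega), Nat.mod_eq_sub_mod h1]

lemma isPower_elim {z : ℕ → A} {i n : ℕ} (hn : 2 ≤ n) (h : isPower (factor z i n)) :
    ∃ p, 0 < p ∧ p ∣ n ∧ 2 * p ≤ n ∧ FP z i n p := by
  obtain ⟨x, k, hk, he⟩ := h
  have hlen : n = k * x.length := by
    have := congrArg List.length he
    rwa [factor_length, wpow_length] at this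
  have hx : x ≠ [] := by rintro rfl; simp at hlen; omega
  have hp : 0 < x.length := List.length_pos_iff.mpr hx
  have h2len : 2 * x.length ≤ n := by
    have := Nat.mul_le_mul_right x.length hk
    omega
  refine ⟨x.length, hp, ⟨k, by rw [hlen, Nat.mul_comm]⟩, h2len, ?_⟩
  intro s hs
  have e1 : (factor z i n)[s]? = some (z (i + s)) := factor_get? z i n s (by omega)
  have e2 : (factor z i n)[s + x.length]? = some (z (i + s + x.length)) := by
    rw [factor_get? z i n (s + x.length) (by omega)]; congr 2; omega
  rw [he, wpow_get? x hx k s (by omega)] at e1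
  rw [he, wpow_get? x hx k (s + x.length) (by omega)] at e2
  rw [Nat.add_mod_right] at e2
  exact Option.some_injective _ (e1.symm.trans e2)

lemma FP.mod_reduce' {z : ℕ → A} {t L p : ℕ} (hp : 0 < p) (h : FP z t L p) :
    ∀ s, s < L → z (t + s) = z (t + s % p) := by
  intro s
  induction s using Nat.strong_induction_on with
  | _ s ih =>
    intro hs
    rcases lt_or_ge s p with h1 | h1
    · rw [Nat.mod_eq_of_lt h1]
    · have h2 := h (s - p) (by omega)
      have e : t + (s - p) + p = t + s := by omega
      rw [e] at h2
      have h3 := ih (s - p) (by omega) (by omega)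
      rw [← h2, h3, Nat.mod_eq_sub_mod h1]

lemma isPower_intro {z : ℕ → A} {t n p : ℕ} (hp : 0 < p) (hpn : p ∣ n) (h2 : 2 * p ≤ n)
    (h : FP z t n p) : isPower (factor z t n) := by
  refine ⟨factor z t p, n / p, ?_, ?_⟩
  · rw [Nat.le_div_iff_mul_le hp]; omega
  · apply List.ext_getElem?
    intro s
    have hlen : (wpow (factor z t p) (n / p)).length = n := by
      rw [wpow_length, factor_length, Nat.div_mul_cancel hpn]
    rcases lt_or_ge s n with hs | hs
    · rw [factor_get? z t n s hs,
        wpow_get? _ (by simp [factor]; omega) _ s (by rw [factor_length, Nat.div_mul_cancel hpn]; exact hs),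
        factor_length, factor_get? z t p _ (Nat.mod_lt _ hp)]
      rw [h.mod_reduce' hp s hs]
    · rw [List.getElem?_eq_none (by rw [factor_length]; omega),
        List.getElem?_eq_none (by rw [hlen]; omega)]

/-- glue: if the window has period p, p ∣ n, and the first block has period g ∣ p,
then the window has period g. -/
lemma fp_glue {z : ℕ → A} {t n p g : ℕ} (hg : 0 < g) (hp : 0 < p) (hgp : g ∣ p)
    (hpn : p ∣ n) (hP : FP z t n p) (hB : FP z t p g) : FP z t n g := by
  intro s hs
  have r1 := hP.mod_reduce' hp s (by omega)
  have r2 := hP.mod_reduce' hp (s + g) (by omega)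
  have r3 := hB.mod_reduce' hg (s % p) (Nat.mod_lt _ hp)
  have r4 := hB.mod_reduce' hg ((s + g) % p) (Nat.mod_lt _ hp)
  rw [Nat.mod_mod_of_dvd _ hgp] at r3 r4
  rw [Nat.add_mod_right] at r4
  have e : t + (s + g) = t + s + g := by omega
  rw [e] at r2
  rw [r1, r3, ← r4, ← r2]

/-- transfer within a p-periodic window: first block = block starting at n - p. -/
lemma fp_transfer {z : ℕ → A} {t n p : ℕ} (hp : 0 < p) (hpn : p ∣ n) (hP : FP z t n p)
    (hn : p ≤ n) : ∀ r, r < p → z (t + r) = z (t + (n - p) + r) := by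
  intro r hr
  have h1 := hP.mod_reduce' hp (n - p + r) (by omega)
  have e1 : t + (n - p + r) = t + (n - p) + r := by omega
  rw [e1] at h1
  have e2 : (n - p + r) % p = r := by
    obtain ⟨k, hk⟩ := hpn
    have hk1 : k ≠ 0 := by rintro rfl; rw [Nat.mul_zero] at hk; omega
    have : n - p + r = r + p * (k - 1) := by
      have : p * (k - 1) + p * 1 = p * k := by rw [← Nat.mul_add]; congr 1; omega
      omega
    rw [this, Nat.add_mul_mod_self_left, Nat.mod_eq_of_lt hr]
  rw [e2] at h1
  exact h1.symm


lemma fp_glue_suffix {z : ℕ → A} {t n p g : ℕ} (hg : 0 < g) (hp : 0 < p) (hgp : g ∣ p)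
    (hpn : p ∣ n) (hpn' : p ≤ n) (hP : FP z t n p) (hB : FP z (t + (n - p)) p g) :
    FP z t n g := by
  have hT := fp_transfer hp hpn hP hpn'
  have hB' : FP z t p g := by
    intro s hs
    have h1 := hT s (by omega)
    have h2 := hB s hs
    have h3 := hT (s + g) (by omega)
    have e1 : t + (s + g) = t + s + g := by omega
    have e2 : t + (n - p) + (s + g) = t + (n - p) + s + g := by omega
    rw [e1, e2] at h3
    rw [h1, h2, ← h3]
  exact fp_glue hg hp hgp hpn hP hB'

lemma periods_eq {z : ℕ → A} {i j n p q : ℕ} (hij : i < j) (h3 : 3 * (j - i) ≤ n)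
    (hp : 0 < p) (hq : 0 < q) (hpn : p ∣ n) (hqn : q ∣ n) (h2p : 2 * p ≤ n)
    (h2q : 2 * q ≤ n) (hPi : FP z i n p) (hPj : FP z j n q)
    (minp : ∀ r, 0 < r → FP z i n r → p ≤ r)
    (minq : ∀ r, 0 < r → FP z j n r → q ≤ r) : p = q := by
  set d := j - i with hd
  set m := n - d with hm
  have hdn : 1 ≤ d := by omega
  have hOp : FP z j m p := by
    have h := FP.shift hPi d
    have e : i + d = j := by omega
    rwa [e] at h
  have hOq : FP z j m q := FP.mono hPj (by omega)
  obtain ⟨g, hg⟩ : ∃ g, g = Nat.gcd p q := ⟨_, rfl⟩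
  have hgpos : 0 < g := hg ▸ Nat.gcd_pos_of_pos_left _ hp
  have hgdp : g ∣ p := hg ▸ Nat.gcd_dvd_left p q
  have hgdq : g ∣ q := hg ▸ Nat.gcd_dvd_right p q
  have hglep : g ≤ p := Nat.le_of_dvd hp hgdp
  have hgleq : g ≤ q := Nat.le_of_dvd hq hgdq
  rcases Nat.lt_trichotomy p q with hlt | heq | hgt
  · -- p < q : contradiction
    exfalso
    have hqm : q < m := by omega
    rcases le_or_gt (p + q - g) m with hc | hc
    · -- Fine-Wilf applies on the overlap
      have hOg : FP z j m g := hg ▸ fw hp hq hOp hOq (by rw [← hg]; exact hc)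
      have hBg : FP z j q g := FP.mono hOg (by omega)
      have hgn : FP z j n g := fp_glue hgpos hq hgdq hqn hPj hBg
      have := minq g hgpos hgn
      omega
    · -- tight case
      obtain ⟨a, hna⟩ := hpn
      have ha3 : 3 ≤ a := by
        rcases Nat.lt_or_ge a 3 with h' | h'
        · interval_cases a <;> omega
        · exact h'
      have h3p : 3 * p ≤ n := by
        have h' : 3 * p ≤ a * p := Nat.mul_le_mul_right p ha3
        have h'' : a * p = p * a := Nat.mul_comm a p
        omega
      -- n = 2q
      have hn2q : n = 2 * q := by
        have hd1 : 2 ≤ n / q := by rw [Nat.le_div_iff_mul_le hq]; omega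
        have hd2 : n / q < 3 := by rw [Nat.div_lt_iff_lt_mul hq]; omega
        have hd3 : n / q * q = n := Nat.div_mul_cancel hqn
        have h4 : n / q = 2 := by omega
        rw [h4] at hd3
        omega
      -- p does not divide q
      have hpq : ¬ p ∣ q := by
        intro hdvd
        have hB : FP z j q p := FP.mono hOp (by omega)
        have : FP z j n p := fp_glue hp hq hdvd hqn hPj hB
        have := minq p hp this
        omega
      -- a is odd
      have haodd : a % 2 = 1 := by
        by_contra h'
        have h2a : a % 2 = 0 := by omega
        apply hpq
        refine ⟨a / 2, ?_⟩
        have e1 : a = 2 * (a / 2) := by omega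
        have e2 : p * (2 * (a / 2)) = 2 * (p * (a / 2)) := by ring
        rw [e1] at hna
        omega
      -- 2g = p
      have h2g : 2 * g = p := by
        have e1 : Nat.gcd (2 * p) (2 * q) = 2 * Nat.gcd p q := Nat.gcd_mul_left 2 p q
        have e2 : 2 * q = a * p := by
          have : a * p = p * a := Nat.mul_comm a p
          omega
        rw [e2] at e1
        rw [Nat.gcd_mul_right 2 p a] at e1
        have hcop : Nat.gcd 2 a = 1 := by
          rw [Nat.gcd_rec 2 a, haodd]
          simp
        rw [hcop, Nat.one_mul] at e1
        rw [← hg] at e1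
        omega
      -- q = g * a
      have hqga : q = g * a := by
        have e1 : p * a = 2 * (g * a) := by rw [← h2g]; ring
        omega
      have hga3 : 3 * g ≤ g * a := by
        have := Nat.mul_le_mul_left g ha3
        have e : g * 3 = 3 * g := Nat.mul_comm g 3
        omega
      omega
  · exact heq
  · -- q < p : contradiction (mirror)
    exfalso
    have hpm : p < m := by omega
    have hdnp : d ≤ n - p := by omega
    have blk : ∀ r, FP z j m r → FP z (i + (n - p)) p r := by
      intro r hr
      have h := FP.shift hr (n - p - d)
      have e1 : j + (n - p - d) = i + (n - p) := by omega
      have e2 : m - (n - p - d) = p := by omega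
      rwa [e1, e2] at h
    rcases le_or_gt (p + q - g) m with hc | hc
    · have hOg : FP z j m g := hg ▸ fw hp hq hOp hOq (by rw [← hg]; exact hc)
      have hgn : FP z i n g :=
        fp_glue_suffix hgpos hp hgdp hpn (by omega) hPi (blk g hOg)
      have := minp g hgpos hgn
      omega
    · obtain ⟨b, hnb⟩ := hqn
      have hb3 : 3 ≤ b := by
        rcases Nat.lt_or_ge b 3 with h' | h'
        · interval_cases b <;> omega
        · exact h'
      have h3q : 3 * q ≤ n := by
        have h' : 3 * q ≤ b * q := Nat.mul_le_mul_right q hb3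
        have h'' : b * q = q * b := Nat.mul_comm b q
        omega
      have hn2p : n = 2 * p := by
        have hd1 : 2 ≤ n / p := by rw [Nat.le_div_iff_mul_le hp]; omega
        have hd2 : n / p < 3 := by rw [Nat.div_lt_iff_lt_mul hp]; omega
        have hd3 : n / p * p = n := Nat.div_mul_cancel hpn
        have h4 : n / p = 2 := by omega
        rw [h4] at hd3
        omega
      have hqp : ¬ q ∣ p := by
        intro hdvd
        have : FP z i n q :=
          fp_glue_suffix hq hp hdvd hpn (by omega) hPi (blk q hOq)
        have := minp q hq this
        omega
      have hbodd : b % 2 = 1 := by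
        by_contra h'
        have h2b : b % 2 = 0 := by omega
        apply hqp
        refine ⟨b / 2, ?_⟩
        have e1 : b = 2 * (b / 2) := by omega
        have e2 : q * (2 * (b / 2)) = 2 * (q * (b / 2)) := by ring
        rw [e1] at hnb
        omega
      have h2g : 2 * g = q := by
        have e1 : Nat.gcd (2 * p) (2 * q) = 2 * Nat.gcd p q := Nat.gcd_mul_left 2 p q
        have e2 : 2 * p = b * q := by
          have : b * q = q * b := Nat.mul_comm b q
          omega
        rw [e2] at e1
        rw [Nat.gcd_mul_right b q 2] at e1
        have hcop : Nat.gcd b 2 = 1 := by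
          rw [Nat.gcd_comm, Nat.gcd_rec 2 b, hbodd]
          simp
        rw [hcop, Nat.one_mul] at e1
        rw [← hg] at e1
        omega
      have hpgb : p = g * b := by
        have e1 : q * b = 2 * (g * b) := by rw [← h2g]; ring
        omega
      have hgb3 : 3 * g ≤ g * b := by
        have := Nat.mul_le_mul_left g hb3
        have e : g * 3 = 3 * g := Nat.mul_comm g 3
        omega
      omega


lemma min_period {z : ℕ → A} {t n : ℕ} (hn : 2 ≤ n) (h : isPower (factor z t n)) :
    ∃ p, 0 < p ∧ FP z t n p ∧ p ∣ n ∧ 2 * p ≤ n ∧ (∀ r, 0 < r → FP z t n r → p ≤ r) := by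
  classical
  obtain ⟨p₀, hp₀, hdvd, h2, hFP⟩ := isPower_elim hn h
  have hex : ∃ p, 0 < p ∧ FP z t n p := ⟨p₀, hp₀, hFP⟩
  obtain ⟨hc, hcFP⟩ := Nat.find_spec hex
  have hmin : ∀ r, 0 < r → FP z t n r → Nat.find hex ≤ r := fun r h1 h2' =>
    Nat.find_le ⟨h1, h2'⟩
  have hcle : Nat.find hex ≤ p₀ := hmin p₀ hp₀ hFP
  have hgpos : 0 < Nat.gcd (Nat.find hex) p₀ := Nat.gcd_pos_of_pos_left _ hc
  have hggl : Nat.gcd (Nat.find hex) p₀ ≤ Nat.find hex :=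
    Nat.le_of_dvd hc (Nat.gcd_dvd_left _ _)
  have hg := fw hc hp₀ hcFP hFP (by omega)
  have hgc : Nat.gcd (Nat.find hex) p₀ = Nat.find hex := by
    have h1 := hmin _ hgpos hg
    omega
  have hcd : Nat.find hex ∣ p₀ := by rw [← hgc]; exact Nat.gcd_dvd_right _ _
  have hlep : Nat.find hex ≤ p₀ := Nat.le_of_dvd hp₀ hcd
  exact ⟨Nat.find hex, hc, hcFP, hcd.trans hdvd, by omega, hmin⟩

lemma factor_split (z : ℕ → A) (t a b : ℕ) :
    factor z t (a + b) = factor z t a ++ factor z (t + a) b := by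
  unfold factor
  rw [List.range_add, List.map_append, List.map_map]
  congr 1
  apply List.map_congr_left
  intro x _
  simp [Function.comp, Nat.add_assoc]

lemma factor_one (z : ℕ → A) (t : ℕ) : factor z t 1 = [z t] := by
  simp [factor, List.range_succ]

lemma conjugate_of_rot {u v : List A} (h : u ~r v) : conjugate u v := by
  obtain ⟨k, hk⟩ := h
  rcases eq_or_ne u [] with rfl | hne
  · exact ⟨[], [], by simp, by simp [← hk, List.rotate_nil]⟩
  · have hlen : 0 < u.length := List.length_pos_iff.mpr hne
    have h1 : u.rotate (k % u.length) = v := by rw [List.rotate_mod]; exact hk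
    have h2 : k % u.length ≤ u.length := le_of_lt (Nat.mod_lt _ hlen)
    rw [List.rotate_eq_drop_append_take h2] at h1
    exact ⟨u.take (k % u.length), u.drop (k % u.length),
      (List.take_append_drop _ u).symm, h1.symm⟩

lemma rot_of_conjugate {u v : List A} (h : conjugate u v) : u ~r v := by
  obtain ⟨s, t, rfl, rfl⟩ := h
  exact List.isRotated_append

lemma conjugate_refl (u : List A) : conjugate u u := ⟨[], u, by simp, by simp⟩

lemma conjugate_trans {u v w : List A} (h1 : conjugate u v) (h2 : conjugate v w) :
    conjugate u w :=
  conjugate_of_rot ((rot_of_conjugate h1).trans (rot_of_conjugate h2))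

lemma conjugate_symm {u v : List A} (h : conjugate u v) : conjugate v u :=
  conjugate_of_rot (rot_of_conjugate h).symm


end Auxiliary

theorem powers_in_between {A : Type*} (z : ℕ → A) (n i j : ℕ) (hn : 2 ≤ n)
    (hi : isPower (factor z i n)) (hj : isPower (factor z j n))
    (hij : i < j) (hj3 : j ≤ i + n / 3) :
    (∀ t, i ≤ t → t ≤ j → isPower (factor z t n)) ∧
    (∀ t₁ t₂, i ≤ t₁ → t₁ ≤ j → i ≤ t₂ → t₂ ≤ j →
      conjugate (factor z t₁ n) (factor z t₂ n)) := by
  obtain ⟨p, hp, hPi, hpn, h2p, minp⟩ := min_period hn hi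
  obtain ⟨q, hq, hPj, hqn, h2q, minq⟩ := min_period hn hj
  have h3 : 3 * (j - i) ≤ n := by omega
  have hpq : p = q := periods_eq hij h3 hp hq hpn hqn h2p h2q hPi hPj minp minq
  subst hpq
  -- the long window [i, j + n) has period p
  have hbig : FP z i (n + (j - i)) p := by
    intro s hs
    rcases lt_or_ge (s + p) n with h1 | h1
    · exact hPi s h1
    · have h2 := hPj (s - (j - i)) (by omega)
      have e1 : j + (s - (j - i)) = i + s := by omega
      rwa [e1] at h2
  have hwin : ∀ t, i ≤ t → t ≤ j → FP z t n p := by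
    intro t ht1 ht2 s hs
    have h1 := hbig (t - i + s) (by omega)
    have e1 : i + (t - i + s) = t + s := by omega
    rwa [e1] at h1
  constructor
  · intro t ht1 ht2
    exact isPower_intro hp hpn h2p (hwin t ht1 ht2)
  · -- conjugacy
    have adj : ∀ t, i ≤ t → t < j → conjugate (factor z t n) (factor z (t + 1) n) := by
      intro t ht1 ht2
      have hzn : z (t + n) = z t := by
        have r1 := FP.mod_reduce' hp hbig (t - i + n) (by omega)
        have r2 := FP.mod_reduce' hp hbig (t - i) (by omega)
        obtain ⟨k, hk⟩ := hpn
        have emod : (t - i + n) % p = (t - i) % p := by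
          rw [hk]; exact Nat.add_mul_mod_self_left _ p k
        have e1 : i + (t - i + n) = t + n := by omega
        have e2 : i + (t - i) = t := by omega
        rw [e1, emod] at r1
        rw [e2] at r2
        rw [r1, ← r2]
      have d1 : factor z t n = [z t] ++ factor z (t + 1) (n - 1) := by
        have e : factor z t n = factor z t (1 + (n - 1)) := by congr 1; omega
        rw [e, factor_split z t 1 (n - 1), factor_one]
      have d2 : factor z (t + 1) n = factor z (t + 1) (n - 1) ++ [z t] := by
        have e : factor z (t + 1) n = factor z (t + 1) ((n - 1) + 1) := by congr 1; omega
        rw [e, factor_split z (t + 1) (n - 1) 1, factor_one]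
        congr 2
        rw [← hzn]
        congr 1
        omega
      exact ⟨[z t], factor z (t + 1) (n - 1), d1, d2⟩
    have chain : ∀ k, i + k ≤ j → conjugate (factor z i n) (factor z (i + k) n) := by
      intro k
      induction k with
      | zero => intro _; exact conjugate_refl _
      | succ k ihk =>
        intro hk
        have c1 := ihk (by omega)
        have c2 := adj (i + k) (by omega) (by omega)
        have e : i + k + 1 = i + (k + 1) := by omega
        rw [e] at c2
        exact conjugate_trans c1 c2
    intro t₁ t₂ h1 h2 h3' h4
    have c1 := chain (t₁ - i) (by omega)
    have c2 := chain (t₂ - i) (by omega)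
    have e1 : i + (t₁ - i) = t₁ := by omega
    have e2 : i + (t₂ - i) = t₂ := by omega
    rw [e1] at c1
    rw [e2] at c2
    exact conjugate_trans (conjugate_symm c1) c2
end

section
/- (Fine–Wilf) If a finite word v has periods p and q, and |v| ≥ p + q, then v has period gcd(p, q). -/
lemma sub_period {A : Type*} (v : List A) (p q : ℕ) (hpq : p ≤ q)
    (hp : hasPeriod v p) (hq : hasPeriod v q) (hlen : p + q ≤ v.length) :
    hasPeriod v (q - p) := by
  intro i hi
  by_cases h : i + q < v.length
  · have h1 := hp (i + (q - p)) (by omega)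
    have h2 := hq i h
    have e : i + (q - p) + p = i + q := by omega
    rw [e] at h1
    rw [← h1, h2]
  · have hip : p ≤ i := by omega
    have h1 := hp (i - p) (by omega)
    have h2 := hq (i - p) (by omega)
    have e1 : i - p + p = i := by omega
    have e2 : i - p + q = i + (q - p) := by omega
    rw [e1] at h1
    rw [e2] at h2
    rw [h2, h1]

lemma fw_aux_s10 (n : ℕ) : ∀ {A : Type*} (v : List A) (p q : ℕ), p + q = n →
    hasPeriod v p → hasPeriod v q → p + q ≤ v.length →
    hasPeriod v (Nat.gcd p q) := by
  induction n using Nat.strong_induction_on with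
  | _ n ih =>
    intro A v p q hn hp hq hlen
    rcases Nat.eq_zero_or_pos p with hp0 | hp0
    · subst hp0; simpa using hq
    rcases Nat.eq_zero_or_pos q with hq0 | hq0
    · subst hq0; simpa using hp
    rcases le_total p q with hle | hle
    · have hsub := sub_period v p q hle hp hq hlen
      have := ih q (by omega) v p (q - p) (by omega) hp hsub (by omega)
      rwa [Nat.gcd_sub_self_right hle] at this
    · have hsub := sub_period v q p hle hq hp (by omega)
      have := ih p (by omega) v q (p - q) (by omega) hq hsub (by omega)
      rwa [Nat.gcd_sub_self_right hle, Nat.gcd_comm] at this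

theorem fine_wilf {A : Type*} (v : List A) (p q : ℕ)
    (hp : hasPeriod v p) (hq : hasPeriod v q) (hlen : p + q ≤ v.length) :
    hasPeriod v (Nat.gcd p q) :=
  fw_aux_s10 (p + q) v p q rfl hp hq hlen
end

section
/- Let I₁, …, I_n be arcs (contiguous blocks) of the cyclic group ℤ/dℤ. Define I'_j = I_j \ (I₁ ∪ ⋯ ∪ I_{j−1}) for each j. Then #I'₁ + #I'₂ + ⋯ + #I'_n + #(I'₁ ∪ ⋯ ∪ I'_n) ≤ 2n, where #S denotes the number of maximal arcs (maximal sets of cyclically consecutive elements) composing a subset S of ℤ/dℤ. -/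
/-- S is an arc (a nonempty set of cyclically consecutive elements) of ℤ/dℤ. -/
def IsArc {d : ℕ} (S : Finset (ZMod d)) : Prop :=
  ∃ (a : ZMod d) (ℓ : ℕ), 1 ≤ ℓ ∧ ℓ ≤ d ∧ S = (Finset.range ℓ).image fun t : ℕ => a + (t : ZMod d)

/-- The number of maximal arcs composing a subset S of ℤ/dℤ: if S is everything,
there is one arc; otherwise, count left endpoints of arcs. -/
def numArcs {d : ℕ} [NeZero d] (S : Finset (ZMod d)) : ℕ :=
  if S = Finset.univ then 1 else (S.filter fun s => s - 1 ∉ S).card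

namespace ArcAux

set_option linter.unusedSectionVars false

variable {d : ℕ} [NeZero d]

def LE (S : Finset (ZMod d)) : Finset (ZMod d) := S.filter fun s => s - 1 ∉ S
def RE (S : Finset (ZMod d)) : Finset (ZMod d) := S.filter fun s => s + 1 ∉ S

lemma mem_LE {S : Finset (ZMod d)} {x : ZMod d} : x ∈ LE S ↔ x ∈ S ∧ x - 1 ∉ S :=
  Finset.mem_filter

lemma mem_RE {S : Finset (ZMod d)} {x : ZMod d} : x ∈ RE S ↔ x ∈ S ∧ x + 1 ∉ S :=
  Finset.mem_filter

lemma mem_image_add_one {S : Finset (ZMod d)} {x : ZMod d} :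
    x ∈ S.image (· + 1) ↔ x - 1 ∈ S := by
  constructor
  · intro h
    obtain ⟨y, hy, rfl⟩ := Finset.mem_image.mp h
    simpa using hy
  · intro h
    exact Finset.mem_image.mpr ⟨x - 1, h, by ring⟩

lemma mem_image_sub_one {S : Finset (ZMod d)} {x : ZMod d} :
    x ∈ S.image (· - 1) ↔ x + 1 ∈ S := by
  constructor
  · intro h
    obtain ⟨y, hy, rfl⟩ := Finset.mem_image.mp h
    simpa using hy
  · intro h
    exact Finset.mem_image.mpr ⟨x + 1, h, by ring⟩

lemma card_LE_eq_card_RE (S : Finset (ZMod d)) : (LE S).card = (RE S).card := by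
  have h1 : LE S = S \ S.image (· + 1) := by
    ext x
    simp only [mem_LE, Finset.mem_sdiff, mem_image_add_one]
  have h2 : RE S = S \ S.image (· - 1) := by
    ext x
    simp only [mem_RE, Finset.mem_sdiff, mem_image_sub_one]
  have h3 : (S ∩ S.image (· + 1)).image (· - 1) = S ∩ S.image (· - 1) := by
    ext x
    constructor
    · intro hx
      obtain ⟨y, hy, rfl⟩ := Finset.mem_image.mp hx
      obtain ⟨hy1, hy2⟩ := Finset.mem_inter.mp hy
      rw [mem_image_add_one] at hy2
      rw [Finset.mem_inter, mem_image_sub_one]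
      exact ⟨hy2, by simpa using hy1⟩
    · intro hx
      obtain ⟨hx1, hx2⟩ := Finset.mem_inter.mp hx
      rw [mem_image_sub_one] at hx2
      refine Finset.mem_image.mpr ⟨x + 1, Finset.mem_inter.mpr ⟨hx2, ?_⟩, by ring⟩
      rw [mem_image_add_one]
      simpa
  have h4 : (S ∩ S.image (· + 1)).card = (S ∩ S.image (· - 1)).card := by
    rw [← h3, Finset.card_image_of_injective _ sub_left_injective]
  have h5 : (S \ S.image (· + 1)).card = S.card - (S ∩ S.image (· + 1)).card := by
    rw [← Finset.sdiff_inter_self_left, Finset.card_sdiff_of_subset Finset.inter_subset_left]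
  have h6 : (S \ S.image (· - 1)).card = S.card - (S ∩ S.image (· - 1)).card := by
    rw [← Finset.sdiff_inter_self_left, Finset.card_sdiff_of_subset Finset.inter_subset_left]
  rw [h1, h2, h5, h6, h4]

lemma numArcs_def (S : Finset (ZMod d)) (h : S ≠ Finset.univ) :
    numArcs S = (LE S).card := if_neg h

lemma numArcs_univ : numArcs (Finset.univ : Finset (ZMod d)) = 1 := if_pos rfl

lemma numArcs_empty : numArcs (∅ : Finset (ZMod d)) = 0 := by
  rw [numArcs_def _ (fun h => (Finset.univ_nonempty (α := ZMod d)).ne_empty h.symm)]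
  simp [LE]

lemma key (U : Finset (ZMod d)) {A : Finset (ZMod d)} (hA : IsArc A) :
    numArcs (A ∪ U) + numArcs (A \ U) ≤ numArcs U + 2 := by
  obtain ⟨a, ℓ, hℓ1, hℓd, rfl⟩ := hA
  set A := (Finset.range ℓ).image fun t : ℕ => a + (t : ZMod d) with hAdef
  have hmem : ∀ x : ZMod d, x ∈ A ↔ ∃ t, t < ℓ ∧ a + (t : ZMod d) = x := by
    intro x
    simp [hAdef, Finset.mem_image, Finset.mem_range]
  by_cases hU : U = Finset.univ
  · subst hU
    have e2 : A \ Finset.univ = ∅ := Finset.sdiff_eq_empty_iff_subset.mpr (Finset.subset_univ A)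
    rw [Finset.union_eq_right.mpr (Finset.subset_univ A), e2, numArcs_univ, numArcs_empty]
    omega
  by_cases hAU : A \ U = Finset.univ
  · have hU0 : U = ∅ := by
      apply Finset.eq_empty_of_forall_notMem
      intro x hx
      have hx2 : x ∈ A \ U := hAU ▸ Finset.mem_univ x
      exact (Finset.mem_sdiff.mp hx2).2 hx
    subst hU0
    rw [Finset.sdiff_empty] at hAU
    rw [Finset.union_empty, Finset.sdiff_empty, hAU, numArcs_univ, numArcs_empty]
  -- main case
  set b : ZMod d := a + ((ℓ - 1 : ℕ) : ZMod d) with hb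
  set D : Finset (ZMod d) := (LE U).filter (fun s => s - 1 ∈ A \ U) with hD
  have hDsub : D ⊆ LE U := Finset.filter_subset _ _
  -- (a) left endpoints of the union
  have hsubA : LE (A ∪ U) ⊆ insert a (LE U \ D) := by
    intro s hs
    rw [mem_LE] at hs
    obtain ⟨hs1, hs2⟩ := hs
    rw [Finset.mem_union] at hs1
    rw [Finset.mem_union, not_or] at hs2
    by_cases hsU : s ∈ U
    · refine Finset.mem_insert.mpr (Or.inr ?_)
      rw [Finset.mem_sdiff]
      refine ⟨mem_LE.mpr ⟨hsU, hs2.2⟩, ?_⟩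
      intro hDmem
      rw [hD, Finset.mem_filter, Finset.mem_sdiff] at hDmem
      exact hs2.1 hDmem.2.1
    · have hsA : s ∈ A := hs1.resolve_right hsU
      obtain ⟨t, ht, rfl⟩ := (hmem s).mp hsA
      rcases Nat.eq_zero_or_pos t with rfl | htpos
      · simp
      · exfalso
        apply hs2.1
        have hmem2 : a + ((t - 1 : ℕ) : ZMod d) ∈ A :=
          (hmem _).mpr ⟨t - 1, by omega, rfl⟩
        have he : a + ((t - 1 : ℕ) : ZMod d) = a + (t : ZMod d) - 1 := by
          have hc : ((t - 1 : ℕ) : ZMod d) = (t : ZMod d) - 1 := by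
            have := Nat.cast_sub (R := ZMod d) htpos
            simpa using this
          rw [hc]
          ring
        rwa [he] at hmem2
  -- (b) right endpoints of the new part
  have hsubB : RE (A \ U) ⊆ insert b (D.image (· - 1)) := by
    intro r hr
    rw [mem_RE] at hr
    obtain ⟨hr1, hr2⟩ := hr
    rw [Finset.mem_sdiff] at hr1
    by_cases hrb : r = b
    · exact hrb ▸ Finset.mem_insert_self _ _
    · obtain ⟨t, ht, rfl⟩ := (hmem r).mp hr1.1
      have htne : t ≠ ℓ - 1 := by
        intro h
        exact hrb (by rw [hb, h])
      have hr1A : a + (t : ZMod d) + 1 ∈ A := by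
        have hm : a + ((t + 1 : ℕ) : ZMod d) ∈ A := (hmem _).mpr ⟨t + 1, by omega, rfl⟩
        have : a + ((t + 1 : ℕ) : ZMod d) = a + (t : ZMod d) + 1 := by
          push_cast
          ring
        rwa [this] at hm
      have hr1U : a + (t : ZMod d) + 1 ∈ U := by
        by_contra h
        exact hr2 (Finset.mem_sdiff.mpr ⟨hr1A, h⟩)
      have hDm : a + (t : ZMod d) + 1 ∈ D := by
        rw [hD, Finset.mem_filter]
        constructor
        · rw [mem_LE]
          exact ⟨hr1U, by simpa using hr1.2⟩
        · simpa using Finset.mem_sdiff.mpr hr1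
      refine Finset.mem_insert.mpr (Or.inr ?_)
      exact Finset.mem_image.mpr ⟨_, hDm, by ring⟩
  have ha : numArcs (A ∪ U) + D.card ≤ (LE U).card + 1 := by
    by_cases h : A ∪ U = Finset.univ
    · rw [h, numArcs_univ]
      have := Finset.card_le_card hDsub
      omega
    · rw [numArcs_def _ h]
      have h1 := Finset.card_le_card hsubA
      have h2 : (insert a (LE U \ D)).card ≤ (LE U \ D).card + 1 := Finset.card_insert_le _ _
      have h3 : (LE U \ D).card = (LE U).card - D.card := Finset.card_sdiff_of_subset hDsub
      have h4 := Finset.card_le_card hDsub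
      omega
  have hb2 : numArcs (A \ U) ≤ D.card + 1 := by
    rw [numArcs_def _ hAU, card_LE_eq_card_RE]
    have h1 := Finset.card_le_card hsubB
    have h2 : (insert b (D.image (· - 1))).card ≤ (D.image (· - 1)).card + 1 :=
      Finset.card_insert_le _ _
    have h3 : (D.image (· - 1)).card = D.card :=
      Finset.card_image_of_injective _ sub_left_injective
    omega
  rw [numArcs_def _ hU]
  omega

lemma biUnion_sdiff (I : ℕ → Finset (ZMod d)) (n : ℕ) :
    ((Finset.range n).biUnion fun j => I j \ (Finset.range j).biUnion I) =
      (Finset.range n).biUnion I := by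
  induction n with
  | zero => simp
  | succ n ih =>
    rw [Finset.range_add_one, Finset.biUnion_insert, Finset.biUnion_insert, ih,
      Finset.sdiff_union_self_eq_union]

end ArcAux

theorem sum_numArcs_le (d n : ℕ) [NeZero d] (I : ℕ → Finset (ZMod d))
    (hI : ∀ j < n, IsArc (I j)) :
    (∑ j ∈ Finset.range n, numArcs (I j \ (Finset.range j).biUnion I)) +
      numArcs ((Finset.range n).biUnion fun j => I j \ (Finset.range j).biUnion I) ≤
      2 * n := by
  induction n with
  | zero => simp [ArcAux.numArcs_empty]
  | succ n ih =>
    have hI' : ∀ j < n, IsArc (I j) := fun j hj => hI j (hj.trans (Nat.lt_succ_self n))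
    have h1 := ih hI'
    rw [ArcAux.biUnion_sdiff] at h1 ⊢
    rw [Finset.range_add_one, Finset.biUnion_insert,
      Finset.sum_insert Finset.notMem_range_self]
    have h2 := ArcAux.key ((Finset.range n).biUnion I) (hI n (Nat.lt_succ_self n))
    omega
end
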